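/- Let S ≥ 2, let p* ∈ Δ^S, let p̄ be the empirical distribution of n ≥ 1 i.i.d. samples from p*, and let ψ > 0. Then with probability at least 1 − S·exp(−ψ² n / 2), the true distribution p* satisfies simultaneously all S+1 linear constraints of the monotone ambiguity set around p̄: for every k ∈ {1,…,S+1}, ∑_{j ≥ k} (p*_j − p̄_j) − ∑_{j < k} (p*_j − p̄_j) ≤ ψ. (The concentration content of Lemma B.6 for the monotone ambiguity set, which avoids the 2^S factor.) -/

import Mathlib

open MeasureTheory

noncomputable section

/-- Empirical distribution of `n` samples `X i` with values in `{1,…,S}`. -/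
def empiricalDist {Ω : Type*} {S n : ℕ} (X : Fin n → Ω → Fin S) (ω : Ω) : Fin S → ℝ :=
  fun j => (Finset.univ.filter fun i => X i ω = j).card / n


open Real ProbabilityTheory


/-- Hoeffding's lemma, two-point case. -/
lemma hoeffding_two_point (q : ℝ) (hq0 : 0 ≤ q) (hq1 : q ≤ 1) (t : ℝ) (ht : 0 ≤ t) :
    q * Real.exp (t * (q - 1)) + (1 - q) * Real.exp (t * q) ≤ Real.exp (t ^ 2 / 8) := by
  set h : ℝ → ℝ := fun s => q * Real.exp (-s) + (1 - q) with hh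
  have hpos : ∀ s, 0 < h s := by
    intro s
    rcases lt_or_eq_of_le hq1 with h1 | h1
    · have : 0 ≤ q * Real.exp (-s) := mul_nonneg hq0 (exp_pos _).le
      simp only [hh]; linarith
    · simp only [hh, h1]
      simpa using exp_pos (-s)
  set f : ℝ → ℝ := fun s => s * q + Real.log (h s) with hf
  set d1 : ℝ → ℝ := fun s => q - q * Real.exp (-s) / h s with hd1
  set g : ℝ → ℝ := fun s => s ^ 2 / 8 - f s with hg
  set g' : ℝ → ℝ := fun s => s / 4 - d1 s with hg'
  have hderh : ∀ s, HasDerivAt h (-(q * Real.exp (-s))) s := by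
    intro s
    have := ((hasDerivAt_neg s).exp.const_mul q).add_const (1 - q)
    exact this.congr_deriv (by ring)
  have hderf : ∀ s, HasDerivAt f (q - q * Real.exp (-s) / h s) s := by
    intro s
    have hl := (Real.hasDerivAt_log (hpos s).ne').comp s (hderh s)
    have := (hasDerivAt_id s).mul_const q |>.add hl
    refine HasDerivAt.congr_deriv (f := f) this ?_
    rw [div_eq_mul_inv]
    ring
  have hderg : ∀ s, HasDerivAt g (g' s) s := by
    intro s
    have h1 : HasDerivAt (fun s : ℝ => s ^ 2 / 8) (s / 4) s := by
      have := (hasDerivAt_pow 2 s).div_const 8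
      exact this.congr_deriv (by norm_num; ring)
    exact h1.sub (hderf s)
  have hderg' : ∀ s, HasDerivAt g' (1 / 4 - q * Real.exp (-s) * (1 - q) / (h s) ^ 2) s := by
    intro s
    have hnum : HasDerivAt (fun s => q * Real.exp (-s)) (-(q * Real.exp (-s))) s := by
      have := (hasDerivAt_neg s).exp.const_mul q
      simpa [mul_comm, mul_assoc, neg_mul, mul_neg] using this
    have hdiv := hnum.div (hderh s) (hpos s).ne'
    have h1 : HasDerivAt (fun s : ℝ => s / 4) (1 / 4) s := (hasDerivAt_id s).div_const 4
    have h2 := h1.sub (((hasDerivAt_const s q).sub hdiv))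
    refine HasDerivAt.congr_deriv (f := g') h2 ?_
    have := (hpos s).ne'
    simp only [hh] at this ⊢
    field_simp
    ring
  have hg'nonneg : ∀ s, 0 ≤ s → 0 ≤ g' s := by
    intro s hs
    have hmono : Monotone g' := by
      apply monotone_of_deriv_nonneg
      · exact fun s => (hderg' s).differentiableAt
      · intro s
        rw [(hderg' s).deriv]
        have hab : q * Real.exp (-s) * (1 - q) / (h s) ^ 2 ≤ 1 / 4 := by
          rw [div_le_iff₀ (pow_pos (hpos s) 2)]
          have key : 4 * (q * Real.exp (-s)) * (1 - q) ≤ (q * Real.exp (-s) + (1 - q)) ^ 2 := by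
            nlinarith [sq_nonneg (q * Real.exp (-s) - (1 - q))]
          simp only [hh]; nlinarith
        linarith
    have h0 : g' 0 = 0 := by
      simp only [hg', hd1, hh]
      norm_num
    calc (0 : ℝ) = g' 0 := h0.symm
    _ ≤ g' s := hmono hs
  have hdg : Differentiable ℝ g := fun s => (hderg s).differentiableAt
  have hgmono : MonotoneOn g (Set.Ici 0) := by
    refine monotoneOn_of_deriv_nonneg (convex_Ici 0) hdg.continuous.continuousOn
      (hdg.differentiableOn) ?_
    intro s hs
    rw [(hderg s).deriv]
    exact hg'nonneg s (le_of_lt (by simpa using hs))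
  have hft : f t ≤ t ^ 2 / 8 := by
    have h0 : g 0 = 0 := by
      simp only [hg, hf, hh]
      norm_num
    have := hgmono (Set.self_mem_Ici) (Set.mem_Ici.mpr ht) ht
    rw [h0] at this
    simp only [hg] at this
    linarith
  have hexp : q * Real.exp (t * (q - 1)) + (1 - q) * Real.exp (t * q) = Real.exp (f t) := by
    simp only [hf]
    rw [Real.exp_add, Real.exp_log (hpos t)]
    rw [show t * (q - 1) = t * q + (-t) by ring, Real.exp_add]
    simp only [hh]
    ring
  rw [hexp]
  exact Real.exp_le_exp.mpr hft


lemma bernoulli_mgf (q : ℝ) (hq0 : 0 ≤ q) (hq1 : q ≤ 1)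
    {Ω : Type*} [MeasurableSpace Ω] (μ : Measure Ω) [IsProbabilityMeasure μ]
    (B : Ω → ℝ) (hBmeas : Measurable B) (hB01 : ∀ ω, B ω = 0 ∨ B ω = 1)
    (hBlaw : μ {ω | B ω = 1} = ENNReal.ofReal q) (t : ℝ) :
    mgf (fun ω => q - B ω) μ t
      = q * Real.exp (t * (q - 1)) + (1 - q) * Real.exp (t * q) := by
  set A : Set Ω := {ω | B ω = 1} with hA
  have hAm : MeasurableSet A := hBmeas (measurableSet_singleton 1)
  have hμA : μ A = ENNReal.ofReal q := hBlaw
  have hμAc : μ Aᶜ = ENNReal.ofReal (1 - q) := by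
    rw [measure_compl hAm (measure_ne_top μ A), hμA, measure_univ,
      ENNReal.ofReal_sub 1 hq0, ENNReal.ofReal_one]
  have hfun : (fun ω => Real.exp (t * (q - B ω)))
      = (A.indicator (fun _ => Real.exp (t * (q - 1)))
        + Aᶜ.indicator (fun _ => Real.exp (t * q))) := by
    funext ω
    by_cases hω : ω ∈ A
    · have hB : B ω = 1 := hω
      simp [Pi.add_apply, Set.indicator_of_mem hω,
        Set.indicator_of_notMem (by simp [hω] : ω ∉ Aᶜ), hB]
    · have hB : B ω = 0 := by
        rcases hB01 ω with h | h
        · exact h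
        · exact absurd h hω
      simp [Pi.add_apply, Set.indicator_of_notMem hω,
        Set.indicator_of_mem (by simp [hω] : ω ∈ Aᶜ), hB]
  rw [mgf, hfun, integral_add'
      ((integrable_const _).indicator hAm) ((integrable_const _).indicator hAm.compl),
    integral_indicator_const _ hAm, integral_indicator_const _ hAm.compl, measureReal_def, measureReal_def, hμA, hμAc,
    ENNReal.toReal_ofReal hq0, ENNReal.toReal_ofReal (by linarith)]

  simp [smul_eq_mul]

lemma bernoulli_tail {Ω : Type*} [MeasurableSpace Ω] (μ : Measure Ω) [IsProbabilityMeasure μ]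
    (n : ℕ) (B : Fin n → Ω → ℝ) (hBmeas : ∀ i, Measurable (B i))
    (hBindep : iIndepFun B μ)
    (q : ℝ) (hq0 : 0 ≤ q) (hq1 : q ≤ 1)
    (hB01 : ∀ i ω, B i ω = 0 ∨ B i ω = 1)
    (hBlaw : ∀ i, μ {ω | B i ω = 1} = ENNReal.ofReal q)
    (ψ : ℝ) (hψ : 0 < ψ) :
    μ {ω | (n : ℝ) * ψ ≤ ∑ i, (q - B i ω)} ≤ ENNReal.ofReal (Real.exp (-2 * ψ ^ 2 * n)) := by
  set W : Fin n → Ω → ℝ := fun i => (fun x => q - x) ∘ B i with hW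
  have hWmeas : ∀ i, Measurable (W i) := fun i => measurable_const.sub (hBmeas i)
  have hWindep : iIndepFun W μ :=
    hBindep.comp _ (fun _ => measurable_const.sub measurable_id)
  set t : ℝ := 4 * ψ with htdef
  have ht : 0 ≤ t := by positivity
  have h_int : ∀ i, Integrable (fun ω => Real.exp (t * W i ω)) μ := by
    intro i
    refine Integrable.mono' (integrable_const (Real.exp (t * q)))
      (((hWmeas i).const_mul t).exp.aestronglyMeasurable) (ae_of_all μ fun ω => ?_)
    rw [Real.norm_eq_abs, abs_of_pos (Real.exp_pos _), Real.exp_le_exp]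
    have hB : 0 ≤ B i ω := by rcases hB01 i ω with h | h <;> simp [h]
    have : W i ω ≤ q := by simp [hW]; linarith
    exact mul_le_mul_of_nonneg_left this ht
  have h_int_sum : Integrable (fun ω => Real.exp (t * (∑ i, W i) ω)) μ :=
    hWindep.integrable_exp_mul_sum hWmeas (fun i _ => h_int i)
  have hset : {ω | (n : ℝ) * ψ ≤ ∑ i, (q - B i ω)} = {ω | (n : ℝ) * ψ ≤ (∑ i, W i) ω} := by
    ext ω; simp [hW, Finset.sum_apply]
  have hcher := measure_ge_le_exp_mul_mgf (X := ∑ i, W i) (μ := μ) ((n : ℝ) * ψ) ht h_int_sum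
  have hmgf_sum : mgf (∑ i, W i) μ t = ∏ i, mgf (W i) μ t := hWindep.mgf_sum hWmeas Finset.univ
  have hmgf_le : ∀ i, mgf (W i) μ t ≤ Real.exp (t ^ 2 / 8) := by
    intro i
    have := bernoulli_mgf q hq0 hq1 μ (B i) (hBmeas i) (hB01 i) (hBlaw i) t
    have heq : mgf (W i) μ t = q * Real.exp (t * (q - 1)) + (1 - q) * Real.exp (t * q) := this
    rw [heq]
    exact hoeffding_two_point q hq0 hq1 t ht
  have hprod : ∏ i, mgf (W i) μ t ≤ Real.exp ((n : ℝ) * (t ^ 2 / 8)) := by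
    calc ∏ i : Fin n, mgf (W i) μ t ≤ ∏ _i : Fin n, Real.exp (t ^ 2 / 8) :=
          Finset.prod_le_prod (fun i _ => mgf_nonneg) (fun i _ => hmgf_le i)
      _ = Real.exp ((n : ℝ) * (t ^ 2 / 8)) := by
          rw [Finset.prod_const, Real.exp_nat_mul]
          simp
  have hfinal : (μ {ω | (n : ℝ) * ψ ≤ (∑ i, W i) ω}).toReal ≤ Real.exp (-2 * ψ ^ 2 * n) := by
    refine hcher.trans ?_
    rw [hmgf_sum]
    calc Real.exp (-t * ((n : ℝ) * ψ)) * ∏ i, mgf (W i) μ t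
        ≤ Real.exp (-t * ((n : ℝ) * ψ)) * Real.exp ((n : ℝ) * (t ^ 2 / 8)) := by
          exact mul_le_mul_of_nonneg_left hprod (Real.exp_pos _).le
      _ = Real.exp (-2 * ψ ^ 2 * n) := by
          rw [← Real.exp_add]
          congr 1
          simp only [htdef]
          ring
  rw [hset]
  exact (ENNReal.le_ofReal_iff_toReal_le (measure_ne_top μ _) (Real.exp_pos _).le).mpr hfinal


/-- Concentration content of Lemma B.6: with probability at least `1 − S·exp(−ψ²n/2)`, the
true distribution `p*` satisfies all `S+1` linear constraints of the monotone ambiguity set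
around the empirical distribution:
`∑_{j ≥ k} (p*_j − p̄_j) − ∑_{j < k} (p*_j − p̄_j) ≤ ψ` for every `k = 1,…,S+1`. -/
theorem monotone_ambiguity_concentration
    {S : ℕ} (hS : 2 ≤ S)
    (pstar : Fin S → ℝ) (hpstar : pstar ∈ stdSimplex ℝ (Fin S))
    (n : ℕ) (hn : 1 ≤ n)
    {Ω : Type*} [MeasurableSpace Ω] (μ : Measure Ω) [IsProbabilityMeasure μ]
    (X : Fin n → Ω → Fin S) (hXmeas : ∀ i, Measurable (X i))
    (hXindep : ProbabilityTheory.iIndepFun X μ)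
    (hXlaw : ∀ i j, μ {ω | X i ω = j} = ENNReal.ofReal (pstar j))
    (ψ : ℝ) (hψ : 0 < ψ) :
    ENNReal.ofReal (1 - S * Real.exp (-ψ ^ 2 * n / 2)) ≤
      μ {ω | ∀ k : Fin (S + 1),
        (∑ j ∈ Finset.univ.filter (fun j : Fin S => (k : ℕ) ≤ (j : ℕ)),
          (pstar j - empiricalDist X ω j)) -
        (∑ j ∈ Finset.univ.filter (fun j : Fin S => (j : ℕ) < (k : ℕ)),
          (pstar j - empiricalDist X ω j)) ≤ ψ} := by
  classical
  have hn0 : (0:ℝ) < n := by exact_mod_cast hn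
  -- basic data
  set J : Fin (S+1) → Finset (Fin S) :=
    fun k => Finset.univ.filter (fun j : Fin S => (k : ℕ) ≤ (j : ℕ)) with hJ
  set q : Fin (S+1) → ℝ := fun k => ∑ j ∈ J k, pstar j with hq
  set B : Fin (S+1) → Fin n → Ω → ℝ :=
    fun k i ω => if (k : ℕ) ≤ (X i ω : ℕ) then 1 else 0 with hB
  have hq0 : ∀ k, 0 ≤ q k := fun k => Finset.sum_nonneg fun j _ => hpstar.1 j
  have hq1 : ∀ k, q k ≤ 1 := by
    intro k
    have := Finset.sum_le_sum_of_subset_of_nonneg (Finset.subset_univ (J k))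
      (fun j _ _ => hpstar.1 j)
    calc q k ≤ ∑ j, pstar j := this
      _ = 1 := hpstar.2
  have hBg : ∀ k i, B k i = (fun j : Fin S => if (k : ℕ) ≤ (j : ℕ) then (1:ℝ) else 0) ∘ X i :=
    fun k i => rfl
  have hBmeas : ∀ k i, Measurable (B k i) := by
    intro k i
    rw [hBg]
    exact (measurable_of_countable
      (fun j : Fin S => if (k : ℕ) ≤ (j : ℕ) then (1:ℝ) else 0)).comp (hXmeas i)
  have hBindep : ∀ k, iIndepFun (B k) μ := by
    intro k
    exact hXindep.comp (fun _ j => if (k : ℕ) ≤ (j : ℕ) then (1:ℝ) else 0)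
      (fun _ => measurable_of_countable _)
  have hB01 : ∀ k i ω, B k i ω = 0 ∨ B k i ω = 1 := by
    intro k i ω
    simp only [hB]
    split <;> simp
  have hBlaw : ∀ k i, μ {ω | B k i ω = 1} = ENNReal.ofReal (q k) := by
    intro k i
    have hset : {ω | B k i ω = 1} = ⋃ j ∈ J k, {ω | X i ω = j} := by
      ext ω
      simp only [hB, Set.mem_setOf_eq, Set.mem_iUnion, hJ, Finset.mem_filter,
        Finset.mem_univ, true_and]
      constructor
      · intro h
        by_cases hc : (k : ℕ) ≤ (X i ω : ℕ)
        · exact ⟨X i ω, hc, rfl⟩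
        · simp [hc] at h
      · rintro ⟨j, hj, hXj⟩
        rw [hXj]
        simp [hj]
    rw [hset, measure_biUnion_finset ?_ (fun j _ =>
      show MeasurableSet {ω | X i ω = j} from (hXmeas i) (measurableSet_singleton j))]
    · show ∑ p ∈ J k, μ {ω | X i ω = p} = ENNReal.ofReal (∑ j ∈ J k, pstar j)
      rw [ENNReal.ofReal_sum_of_nonneg (fun j _ => hpstar.1 j)]
      exact Finset.sum_congr rfl fun j _ => hXlaw i j
    · intro a ha b hb hab
      simp only [Function.onFun]
      apply Set.disjoint_left.mpr
      intro ω hωa hωb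
      exact hab (by rw [← hωa, ← hωb] : a = b)
  -- empirical sums
  have hemp : ∀ k (ω : Ω), ∑ j ∈ J k, empiricalDist X ω j = (∑ i, B k i ω) / n := by
    intro k ω
    unfold empiricalDist
    rw [← Finset.sum_div]
    congr 1
    have : ∀ j : Fin S, ((Finset.univ.filter fun i => X i ω = j).card : ℝ)
        = ∑ i : Fin n, (if X i ω = j then 1 else 0) := by
      intro j
      rw [Finset.card_filter]
      push_cast
      rfl
    rw [Finset.sum_congr rfl fun j _ => this j, Finset.sum_comm]
    refine Finset.sum_congr rfl fun i _ => ?_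
    rw [Finset.sum_ite_eq (J k) (X i ω) (fun _ => (1:ℝ))]
    simp only [hJ, Finset.mem_filter, Finset.mem_univ, true_and, hB]
  have hemptot : ∀ ω : Ω, ∑ j, empiricalDist X ω j = 1 := by
    intro ω
    unfold empiricalDist
    rw [← Finset.sum_div]
    have : ∀ j : Fin S, ((Finset.univ.filter fun i => X i ω = j).card : ℝ)
        = ∑ i : Fin n, (if X i ω = j then 1 else 0) := by
      intro j
      rw [Finset.card_filter]
      push_cast
      rfl
    rw [Finset.sum_congr rfl fun j _ => this j, Finset.sum_comm]
    have : ∀ i : Fin n, ∑ j : Fin S, (if X i ω = j then (1:ℝ) else 0) = 1 := by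
      intro i
      rw [Finset.sum_ite_eq Finset.univ (X i ω) (fun _ => (1:ℝ))]
      simp
    rw [Finset.sum_congr rfl fun i _ => this i]
    rw [Finset.sum_const]
    simp [hn0.ne']
  -- the constraint expression equals 2 * (q k - (∑ i, B k i ω)/n)
  have hexpr : ∀ (k : Fin (S+1)) (ω : Ω),
      (∑ j ∈ Finset.univ.filter (fun j : Fin S => (k : ℕ) ≤ (j : ℕ)),
        (pstar j - empiricalDist X ω j)) -
      (∑ j ∈ Finset.univ.filter (fun j : Fin S => (j : ℕ) < (k : ℕ)),
        (pstar j - empiricalDist X ω j))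
      = 2 * (q k - (∑ i, B k i ω) / n) := by
    intro k ω
    have hsplit : (∑ j ∈ Finset.univ.filter (fun j : Fin S => (k : ℕ) ≤ (j : ℕ)),
        (pstar j - empiricalDist X ω j)) +
        (∑ j ∈ Finset.univ.filter (fun j : Fin S => (j : ℕ) < (k : ℕ)),
        (pstar j - empiricalDist X ω j)) = 0 := by
      have hfe : Finset.univ.filter (fun j : Fin S => (j : ℕ) < (k : ℕ))
          = Finset.univ.filter (fun j : Fin S => ¬ ((k : ℕ) ≤ (j : ℕ))) := by
        ext j
        simp only [Finset.mem_filter, Finset.mem_univ, true_and, not_le]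
      rw [hfe, Finset.sum_filter_add_sum_filter_not, Finset.sum_sub_distrib,
        hpstar.2, hemptot ω]
      ring
    have hA : (∑ j ∈ Finset.univ.filter (fun j : Fin S => (k : ℕ) ≤ (j : ℕ)),
        (pstar j - empiricalDist X ω j)) = q k - (∑ i, B k i ω) / n := by
      rw [Finset.sum_sub_distrib]
      rw [hq]
      rw [← hemp k ω]
    linarith [hsplit, hA]
  -- failure sets
  set F : Fin (S+1) → Set Ω :=
    fun k => {ω | (n : ℝ) * (ψ/2) ≤ ∑ i, (q k - B k i ω)} with hF
  set E : Set Ω := {ω | ∀ k : Fin (S + 1),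
        (∑ j ∈ Finset.univ.filter (fun j : Fin S => (k : ℕ) ≤ (j : ℕ)),
          (pstar j - empiricalDist X ω j)) -
        (∑ j ∈ Finset.univ.filter (fun j : Fin S => (j : ℕ) < (k : ℕ)),
          (pstar j - empiricalDist X ω j)) ≤ ψ} with hE
  have hEc : Eᶜ ⊆ ⋃ k, F k := by
    intro ω hω
    simp only [hE, Set.mem_compl_iff, Set.mem_setOf_eq, not_forall] at hω
    obtain ⟨k, hk⟩ := hω
    rw [hexpr k ω] at hk
    push_neg at hk
    refine Set.mem_iUnion.mpr ⟨k, ?_⟩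
    simp only [hF, Set.mem_setOf_eq]
    have hsum : ∑ i, (q k - B k i ω) = (n:ℝ) * q k - ∑ i, B k i ω := by
      rw [Finset.sum_sub_distrib, Finset.sum_const]
      simp [mul_comm]
    rw [hsum]
    have h2 : ψ / 2 < q k - (∑ i, B k i ω) / n := by linarith
    have := mul_lt_mul_of_pos_left h2 hn0
    rw [mul_sub] at this
    rw [mul_div_cancel₀ _ hn0.ne'] at this
    linarith
  -- the two trivial failure sets are empty
  have hF0 : F 0 = ∅ := by
    apply Set.eq_empty_iff_forall_notMem.mpr
    intro ω hω
    simp only [hF, Set.mem_setOf_eq] at hω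
    have hBall : ∀ i, B 0 i ω = 1 := by
      intro i
      simp [hB]
    have hq0' : q 0 = 1 := by
      show ∑ j ∈ J 0, pstar j = 1
      have : J 0 = Finset.univ := by
        apply Finset.filter_true_of_mem
        intro j _
        simp
      rw [this, hpstar.2]
    have : ∑ i, (q 0 - B 0 i ω) = 0 := by
      rw [Finset.sum_congr rfl fun i _ => by rw [hBall i, hq0']]
      simp
    rw [this] at hω
    nlinarith
  have hFlast : F (Fin.last S) = ∅ := by
    apply Set.eq_empty_iff_forall_notMem.mpr
    intro ω hω
    simp only [hF, Set.mem_setOf_eq] at hω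
    have hBall : ∀ i, B (Fin.last S) i ω = 0 := by
      intro i
      simp only [hB, Fin.val_last]
      have : ¬ (S ≤ (X i ω : ℕ)) := not_le.mpr (X i ω).isLt
      simp [this]
    have hq0' : q (Fin.last S) = 0 := by
      show ∑ j ∈ J (Fin.last S), pstar j = 0
      have : J (Fin.last S) = ∅ := by
        apply Finset.filter_false_of_mem
        intro j _
        simp only [Fin.val_last]
        exact not_le.mpr j.isLt
      rw [this, Finset.sum_empty]
    have : ∑ i, (q (Fin.last S) - B (Fin.last S) i ω) = 0 := by
      rw [Finset.sum_congr rfl fun i _ => by rw [hBall i, hq0']]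
      simp
    rw [this] at hω
    nlinarith
  -- bound each failure set
  set c : ℝ := Real.exp (-ψ ^ 2 * n / 2) with hc
  have hFbound : ∀ k, μ (F k) ≤ ENNReal.ofReal c := by
    intro k
    have := bernoulli_tail μ n (B k) (hBmeas k) (hBindep k) (q k) (hq0 k) (hq1 k)
      (hB01 k) (hBlaw k) (ψ/2) (by linarith)
    refine this.trans ?_
    apply ENNReal.ofReal_le_ofReal
    apply le_of_eq
    congr 1
    ring
  -- union bound
  have hEcbound : μ Eᶜ ≤ ENNReal.ofReal ((S:ℝ) * c) := by
    calc μ Eᶜ ≤ μ (⋃ k, F k) := measure_mono hEc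
      _ ≤ ∑ k, μ (F k) := by
          refine (measure_iUnion_le F).trans ?_
          rw [tsum_fintype]
      _ ≤ ENNReal.ofReal ((S:ℝ) * c) := by
          have hsub : ∑ k : Fin (S+1), μ (F k)
              = ∑ k ∈ Finset.univ \ {0, Fin.last S}, μ (F k) := by
            symm
            apply Finset.sum_subset (Finset.sdiff_subset)
            intro k _ hk
            simp only [Finset.mem_sdiff, Finset.mem_univ, true_and, Finset.mem_insert,
              Finset.mem_singleton, not_not] at hk
            rcases hk with h | h
            · rw [h, hF0]; simp
            · rw [h, hFlast]; simp
          rw [hsub]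
          calc ∑ k ∈ Finset.univ \ {0, Fin.last S}, μ (F k)
              ≤ ∑ _k ∈ Finset.univ \ {0, Fin.last S}, ENNReal.ofReal c :=
                Finset.sum_le_sum fun k _ => hFbound k
            _ = (Finset.univ \ {0, Fin.last S}).card • ENNReal.ofReal c := by
                rw [Finset.sum_const]
            _ ≤ ENNReal.ofReal ((S:ℝ) * c) := by
                have hcard : (Finset.univ \ ({0, Fin.last S} : Finset (Fin (S+1)))).card ≤ S := by
                  have h2 : ({0, Fin.last S} : Finset (Fin (S+1))).card = 2 := by
                    rw [Finset.card_insert_of_notMem, Finset.card_singleton]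
                    simp only [Finset.mem_singleton]
                    intro h
                    have := congrArg Fin.val h
                    simp [Fin.val_last] at this
                    omega
                  rw [Finset.card_sdiff_of_subset (Finset.subset_univ _), h2, Finset.card_univ,
                    Fintype.card_fin]
                  omega
                rw [nsmul_eq_mul, ENNReal.ofReal_mul (by positivity : (0:ℝ) ≤ (S:ℝ)),
                  ENNReal.ofReal_natCast]
                exact mul_le_mul_left (by exact_mod_cast hcard) _
  -- conclude
  have key : ENNReal.ofReal (1 - (S:ℝ) * c) ≤ μ E := by
    rw [ENNReal.ofReal_sub 1 (by positivity)]
    rw [ENNReal.ofReal_one]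
    have h1 : (1:ENNReal) - ENNReal.ofReal ((S:ℝ) * c) ≤ 1 - μ Eᶜ :=
      tsub_le_tsub_left hEcbound 1
    refine h1.trans ?_
    rw [tsub_le_iff_right]
    calc (1:ENNReal) = μ Set.univ := (measure_univ).symm
      _ = μ (E ∪ Eᶜ) := by rw [Set.union_compl_self]
      _ ≤ μ E + μ Eᶜ := measure_union_le E Eᶜ
  exact key
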